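/- Let N ≥ 2, let p be a full-support prior on {x_1,…,x_N}, and let ε_r ≥ 0. For the randomized response mechanism R with parameter ε_r (R(i,i) = e^{ε_r}/((N−1)+e^{ε_r}) and R(i,j) = 1/((N−1)+e^{ε_r}) for i ≠ j), the maximum pointwise maximal leakage over all outputs equals max_{1≤j≤N} ℓ(X→y_j) = log( e^{ε_r} / ((e^{ε_r}−1)·min_{1≤i≤N} p_i + 1) ). -/

import Mathlib

open scoped BigOperators Classical

noncomputable section

/-- The output distribution `P_Y(j) = ∑ i, p i * P i j` induced by a prior `p`
and a mechanism `P`. -/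
def outDist {N M : ℕ} (p : Fin N → ℝ) (P : Matrix (Fin N) (Fin M) ℝ) (j : Fin M) : ℝ :=
  ∑ i, p i * P i j

/-- A privacy mechanism: nonnegative entries, rows summing to one. -/
def IsMechanism {N M : ℕ} (P : Matrix (Fin N) (Fin M) ℝ) : Prop :=
  (∀ i j, 0 ≤ P i j) ∧ ∀ i, ∑ j, P i j = 1

/-- Pointwise maximal leakage to output `j`:
`ℓ(X → y_j) = log((max_i P i j) / P_Y(j))`. -/
def pml {N M : ℕ} (p : Fin N → ℝ) (P : Matrix (Fin N) (Fin M) ℝ) (j : Fin M) : ℝ :=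
  Real.log ((⨆ i, P i j) / outDist p P j)

/-- `P` satisfies `ε`-PML (w.r.t. prior `p`): the leakage of every output of
positive probability is at most `ε`. -/
def SatisfiesPML {N M : ℕ} (p : Fin N → ℝ) (ε : ℝ) (P : Matrix (Fin N) (Fin M) ℝ) : Prop :=
  ∀ j, 0 < outDist p P j → pml p P j ≤ ε

/-- A sublinear function `μ : [0,∞)^N → [0,∞)`: nonnegative, positively
homogeneous and subadditive on the nonnegative orthant. -/
def Sublinear {N : ℕ} (μ : (Fin N → ℝ) → ℝ) : Prop :=
  (∀ x, (∀ i, 0 ≤ x i) → 0 ≤ μ x) ∧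
  (∀ (c : ℝ), 0 ≤ c → ∀ x, (∀ i, 0 ≤ x i) → μ (c • x) = c * μ x) ∧
  (∀ x y, (∀ i, 0 ≤ x i) → (∀ i, 0 ≤ y i) → μ (x + y) ≤ μ x + μ y)

/-- The sub-convex utility associated with `μ`: `U(P) = ∑ j, μ(P_j)` where
`P_j` is the `j`-th column of `P`. -/
def utility {N M : ℕ} (μ : (Fin N → ℝ) → ℝ) (P : Matrix (Fin N) (Fin M) ℝ) : ℝ :=
  ∑ j, μ (fun i => P i j)

end

/-- The randomized response mechanism with parameter `εr`. -/
noncomputable def randResp (N : ℕ) (εr : ℝ) : Matrix (Fin N) (Fin N) ℝ :=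
  Matrix.of fun i j =>
    if i = j then Real.exp εr / (((N : ℝ) - 1) + Real.exp εr)
    else 1 / (((N : ℝ) - 1) + Real.exp εr)


lemma pml_randResp (N : ℕ) (hN : 2 ≤ N) (p : Fin N → ℝ)
    (hp : ∀ i, 0 < p i) (hpsum : ∑ i, p i = 1) (εr : ℝ) (hεr : 0 ≤ εr) (j : Fin N) :
    pml p (randResp N εr) j
      = Real.log (Real.exp εr / ((Real.exp εr - 1) * p j + 1)) := by
  set E := Real.exp εr with hE
  have hE1 : 1 ≤ E := Real.one_le_exp hεr
  have hNR : (1:ℝ) ≤ (N:ℝ) - 1 := by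
    have : (2:ℝ) ≤ (N:ℝ) := by exact_mod_cast hN
    linarith
  have hD : 0 < ((N:ℝ) - 1) + E := by linarith
  have hsupcol : (⨆ i, randResp N εr i j) = E / (((N:ℝ) - 1) + E) := by
    haveI : Nonempty (Fin N) := ⟨⟨0, by omega⟩⟩
    apply le_antisymm
    · apply ciSup_le
      intro i
      simp only [randResp, Matrix.of_apply]
      by_cases h : i = j
      · simp [h, ← hE]
      · simp only [h, if_false]
        gcongr
    · have := le_ciSup (Set.Finite.bddAbove (Set.finite_range fun i => randResp N εr i j)) j
      simpa [randResp] using this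
  have hout : outDist p (randResp N εr) j = ((E - 1) * p j + 1) / (((N:ℝ) - 1) + E) := by
    unfold outDist
    have : ∀ i, p i * randResp N εr i j
        = p i * (1 / (((N:ℝ) - 1) + E))
          + (if i = j then p i * ((E - 1) / (((N:ℝ) - 1) + E)) else 0) := by
      intro i
      by_cases h : i = j <;> simp [randResp, h, ← hE] <;> field_simp <;> ring
    rw [Finset.sum_congr rfl fun i _ => this i, Finset.sum_add_distrib,
      ← Finset.sum_mul, hpsum, Finset.sum_ite_eq' Finset.univ j]
    simp only [Finset.mem_univ, if_true]
    field_simp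
    ring
  rw [pml, hsupcol, hout]
  have hden : 0 < (E - 1) * p j + 1 := by
    have := (hp j).le
    nlinarith [hp j]
  congr 1
  field_simp

theorem randResp_max_pml (N : ℕ) (hN : 2 ≤ N) (p : Fin N → ℝ)
    (hp : ∀ i, 0 < p i) (hpsum : ∑ i, p i = 1) (εr : ℝ) (hεr : 0 ≤ εr) :
    (⨆ j, pml p (randResp N εr) j)
      = Real.log (Real.exp εr / ((Real.exp εr - 1) * (⨅ i, p i) + 1)) := by
  haveI : Nonempty (Fin N) := ⟨⟨0, by omega⟩⟩
  set E := Real.exp εr with hE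
  have hE1 : 1 ≤ E := Real.one_le_exp hεr
  obtain ⟨i0, hi0⟩ := Finite.exists_min p
  have hinf : (⨅ i, p i) = p i0 :=
    le_antisymm (ciInf_le (Finite.bddBelow_range p) i0) (le_ciInf hi0)
  have hden : ∀ j : Fin N, 0 < (E - 1) * p j + 1 := fun j => by nlinarith [hp j]
  have hsup : (⨆ j, pml p (randResp N εr) j) = pml p (randResp N εr) i0 := by
    apply le_antisymm
    · apply ciSup_le
      intro j
      rw [pml_randResp N hN p hp hpsum εr hεr, pml_randResp N hN p hp hpsum εr hεr]
      apply Real.log_le_log (div_pos (by positivity) (hden j))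
      gcongr
      · exact hden i0
      · exact hi0 j
    · exact le_ciSup (Finite.bddAbove_range _) i0
  rw [hsup, pml_randResp N hN p hp hpsum εr hεr, hinf]
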